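/- For n ≥ 2, the number of n × n matrices M with entries in {0, 1, ..., n} such that each row and column of M contains exactly two nonzero entries, each symbol k ∈ {1,...,n} appears exactly twice among the entries of M, and the set of positions of nonzero entries forms an H-cycle, is at least (1/2)·n!·(n−1)!·(2n−3)!/2^(n−2) when additionally the three fixed assignments M(i₁,j₁)=M(i₂,j₂)=1, M(i₂,j₁)=2 are allowed to vary over choices; in particular this quantity exceeds (n!)⁴ for all sufficiently large n. -/

import Mathlib

set_option linter.unusedSectionVars false


/-- A set `S ⊆ [n] × [n]` of positions is an H-cycle if for some bijective enumerations
`I J : ZMod n → [n]` it equals `{(i₁,j₁),(i₂,j₁),(i₂,j₂),…,(iₙ,jₙ),(i₁,jₙ)}`. -/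
def IsHCycle (n : ℕ) (S : Set (Fin n × Fin n)) : Prop :=
  ∃ I J : ZMod n → Fin n, Function.Bijective I ∧ Function.Bijective J ∧
    S = {p | ∃ a : ZMod n, p = (I a, J a) ∨ p = (I (a + 1), J a)}

/-- `n × n` matrices with entries in `{0,1,…,n}`, exactly two nonzero entries in each
row and column, each symbol `k ∈ {1,…,n}` appearing exactly twice, whose nonzero
positions form an H-cycle. -/
def goodMatrices (n : ℕ) : Set (Fin n → Fin n → ℕ) :=
  {M | (∀ i j, M i j ≤ n) ∧
    (∀ i, (Finset.univ.filter fun j => M i j ≠ 0).card = 2) ∧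
    (∀ j, (Finset.univ.filter fun i => M i j ≠ 0).card = 2) ∧
    (∀ k, 1 ≤ k → k ≤ n →
      (Finset.univ.filter fun p : Fin n × Fin n => M p.1 p.2 = k).card = 2) ∧
    IsHCycle n {p : Fin n × Fin n | M p.1 p.2 ≠ 0}}




lemma pow_ineq (m : ℕ) (hm : 44 ≤ m) : (2*m+1)^4 < 2^(m+2) := by
  induction m, hm using Nat.le_induction with
  | base => norm_num
  | succ k hk ih =>
    have hk2 : 44*k ≤ k*k := Nat.mul_le_mul_right k hk
    have h2 : (2*(k+1)+1)^4 ≤ 2 * (2*k+1)^4 := by nlinarith [hk, hk2]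
    calc (2*(k+1)+1)^4 ≤ 2 * (2*k+1)^4 := h2
      _ < 2 * 2^(k+2) := by omega
      _ = 2^(k+1+2) := by ring

lemma fact_ineq (m : ℕ) (hm : 44 ≤ m) :
    (Nat.factorial m)^2 * 2^(m-2) < Nat.factorial (2*m - 3) := by
  obtain ⟨k, hk⟩ : ∃ k, 2*m = k + 3 := ⟨2*m - 3, by omega⟩
  have hkm : 2*m - 3 = k := by omega
  have hid : (2*m).choose m * (Nat.factorial m * Nat.factorial m) = Nat.factorial (2*m) := by
    have := Nat.choose_mul_factorial_mul_factorial (show m ≤ 2*m by omega)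
    have h2m : 2*m - m = m := by omega
    rw [h2m] at this; linarith [this]
  have h1 : Nat.factorial m ^ 2 * 4 ^ m ≤ (2*m+1) * Nat.factorial (2*m) := by
    calc Nat.factorial m ^ 2 * 4 ^ m ≤ Nat.factorial m ^ 2 * ((2*m+1) * (2*m).choose m) := by
          exact Nat.mul_le_mul_left _ (Nat.four_pow_le_two_mul_add_one_mul_central_binom m)
      _ = (2*m+1) * ((2*m).choose m * (Nat.factorial m * Nat.factorial m)) := by ring
      _ = (2*m+1) * Nat.factorial (2*m) := by rw [hid]
  have h2 : Nat.factorial (2*m) = (k+3) * ((k+2) * ((k+1) * Nat.factorial k)) := by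
    rw [hk, Nat.factorial_succ, Nat.factorial_succ, Nat.factorial_succ]
  have e1 : k+3 ≤ 2*m+1 := by omega
  have e2 : k+2 ≤ 2*m+1 := by omega
  have e3 : k+1 ≤ 2*m+1 := by omega
  have h3 : (2*m+1) * ((k+3) * ((k+2) * (k+1))) ≤ (2*m+1)^4 := by
    have : (2*m+1)^4 = (2*m+1) * ((2*m+1) * ((2*m+1) * (2*m+1))) := by ring
    rw [this]; gcongr
  have h4 : Nat.factorial m ^ 2 * 4 ^ m ≤ (2*m+1)^4 * Nat.factorial k := by
    calc Nat.factorial m ^ 2 * 4 ^ m ≤ (2*m+1) * Nat.factorial (2*m) := h1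
      _ = ((2*m+1) * ((k+3) * ((k+2) * (k+1)))) * Nat.factorial k := by rw [h2]; ring
      _ ≤ (2*m+1)^4 * Nat.factorial k := Nat.mul_le_mul_right _ h3
  have h5 : Nat.factorial m ^ 2 * 4 ^ m < 2^(m+2) * Nat.factorial k :=
    lt_of_le_of_lt h4 (by
      exact (Nat.mul_lt_mul_right (Nat.factorial_pos k)).mpr (pow_ineq m hm))
  have h6 : (4:ℕ) ^ m = 2^(m-2) * 2^(m+2) := by
    rw [← pow_add]
    have : m - 2 + (m + 2) = 2 * m := by omega
    rw [this, pow_mul]; norm_num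
  rw [hkm]
  have h7 : Nat.factorial m ^ 2 * 2^(m-2) * 2^(m+2) < Nat.factorial k * 2^(m+2) := by
    calc Nat.factorial m ^ 2 * 2^(m-2) * 2^(m+2) = Nat.factorial m ^2 * 4^m := by rw [h6]; ring
      _ < 2^(m+2) * Nat.factorial k := h5
      _ = Nat.factorial k * 2^(m+2) := by ring
  exact (Nat.mul_lt_mul_right (by positivity)).mp h7

namespace Stmt18

def pi2 (t : ℕ) : ℕ := (t + 1) / 2 + 2

def Free (n : ℕ) : Type := {e : ZMod n × Bool // e ≠ (0, false) ∧ e ≠ (1, false) ∧ e ≠ (0, true)}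

section

variable (n : ℕ) [NeZero n]

instance : Fintype (Free n) := by unfold Free; exact Subtype.fintype _
instance : DecidableEq (Free n) := by unfold Free; infer_instance

def lab (β : Fin (2 * n - 3) ≃ Free n) (e : ZMod n × Bool) : ℕ :=
  if h : e ≠ (0, false) ∧ e ≠ (1, false) ∧ e ≠ (0, true) then pi2 (β.symm ⟨e, h⟩).val
  else if e = (0, true) then 2 else 1

def Mat (I J : ZMod n ≃ Fin n) (β : Fin (2 * n - 3) ≃ Free n) : Fin n → Fin n → ℕ :=
  fun i j =>
  if J.symm j = I.symm i then lab n β (I.symm i, false)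
  else if J.symm j = I.symm i - 1 then lab n β (J.symm j, true)
  else 0

def phi (I J : ZMod n ≃ Fin n) : ZMod n × Bool → Fin n × Fin n :=
  fun e => if e.2 then (I (e.1 + 1), J e.1) else (I e.1, J e.1)

variable {n}
variable (hn : 3 ≤ n)

include hn

lemma one_ne_zero' : (1 : ZMod n) ≠ 0 := by
  haveI : Fact (1 < n) := ⟨by omega⟩
  exact one_ne_zero

lemma add_one_ne (a : ZMod n) : a + 1 ≠ a := by
  intro h
  exact one_ne_zero' hn (by linear_combination h)

lemma sub_one_ne (a : ZMod n) : a - 1 ≠ a := by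
  intro h
  exact one_ne_zero' hn (by linear_combination -h)

omit hn

lemma lab_pos (β : Fin (2 * n - 3) ≃ Free n) (e : ZMod n × Bool) : 1 ≤ lab n β e := by
  unfold lab
  split
  · unfold pi2; omega
  · split <;> omega

include hn

lemma lab_le (β : Fin (2 * n - 3) ≃ Free n) (e : ZMod n × Bool) : lab n β e ≤ n := by
  unfold lab
  split
  · next h => have := (β.symm ⟨e, h⟩).isLt; unfold pi2; omega
  · split <;> omega

omit hn

lemma mat_apply_vert (I J : ZMod n ≃ Fin n) (β : Fin (2 * n - 3) ≃ Free n) (a : ZMod n) :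
    Mat n I J β (I a) (J a) = lab n β (a, false) := by
  unfold Mat; simp

include hn

lemma mat_apply_horiz (I J : ZMod n ≃ Fin n) (β : Fin (2 * n - 3) ≃ Free n) (a : ZMod n) :
    Mat n I J β (I (a + 1)) (J a) = lab n β (a, true) := by
  unfold Mat
  simp only [Equiv.symm_apply_apply]
  rw [if_neg, if_pos]
  · simp
  · exact (add_one_ne hn a).symm

lemma mat_ne_zero_iff (I J : ZMod n ≃ Fin n) (β : Fin (2 * n - 3) ≃ Free n) (i j : Fin n) :
    Mat n I J β i j ≠ 0 ↔ (J.symm j = I.symm i ∨ J.symm j = I.symm i - 1) := by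
  unfold Mat
  constructor
  · intro h
    by_cases h1 : J.symm j = I.symm i
    · exact Or.inl h1
    · rw [if_neg h1] at h
      by_cases h2 : J.symm j = I.symm i - 1
      · exact Or.inr h2
      · rw [if_neg h2] at h; exact absurd rfl h
  · intro h
    rcases h with h | h
    · rw [if_pos h]
      have := lab_pos (β := β) (I.symm i, false)
      omega
    · by_cases h1 : J.symm j = I.symm i
      · rw [if_pos h1]
        have := lab_pos (β := β) (I.symm i, false)
        omega
      · rw [if_neg h1, if_pos h]
        have := lab_pos (β := β) (J.symm j, true)
        omega

lemma mat_at_phi (I J : ZMod n ≃ Fin n) (β : Fin (2 * n - 3) ≃ Free n) (e : ZMod n × Bool) :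
    Mat n I J β (phi n I J e).1 (phi n I J e).2 = lab n β e := by
  obtain ⟨a, b⟩ := e
  cases b
  · simpa [phi] using mat_apply_vert I J β a
  · simpa [phi] using mat_apply_horiz hn I J β a

lemma phi_inj (I J : ZMod n ≃ Fin n) : Function.Injective (phi n I J) := by
  rintro ⟨a, b⟩ ⟨a', b'⟩ h
  unfold phi at h
  cases b <;> cases b' <;> simp only [Bool.false_eq_true, if_false, if_true, Prod.mk.injEq] at h <;>
      obtain ⟨h1, h2⟩ := h
  · rw [J.injective h2]
  · rw [J.injective h2] at h1
    exact absurd (I.injective h1).symm (add_one_ne hn a')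
  · rw [J.injective h2] at h1
    exact absurd (I.injective h1) (add_one_ne hn a')
  · rw [J.injective h2]

lemma mat_pos_mem_range (I J : ZMod n ≃ Fin n) (β : Fin (2 * n - 3) ≃ Free n) (i j : Fin n)
    (h : Mat n I J β i j ≠ 0) : ∃ e, phi n I J e = (i, j) := by
  rcases (mat_ne_zero_iff hn I J β i j).mp h with h1 | h1
  · refine ⟨(J.symm j, false), ?_⟩
    have h2 : I (J.symm j) = i := by rw [h1]; simp
    simp [phi, h2]
  · refine ⟨(J.symm j, true), ?_⟩
    simp only [phi, if_pos]
    have : J.symm j + 1 = I.symm i := by rw [h1]; ring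
    simp [this]

lemma row_filter (I J : ZMod n ≃ Fin n) (β : Fin (2 * n - 3) ≃ Free n) (i : Fin n) :
    (Finset.univ.filter fun j => Mat n I J β i j ≠ 0) =
      {J (I.symm i), J (I.symm i - 1)} := by
  ext j
  simp only [Finset.mem_filter, Finset.mem_univ, true_and, Finset.mem_insert,
    Finset.mem_singleton]
  rw [mat_ne_zero_iff hn, Equiv.symm_apply_eq, Equiv.symm_apply_eq]

lemma col_filter (I J : ZMod n ≃ Fin n) (β : Fin (2 * n - 3) ≃ Free n) (j : Fin n) :
    (Finset.univ.filter fun i => Mat n I J β i j ≠ 0) =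
      {I (J.symm j), I (J.symm j + 1)} := by
  ext i
  simp only [Finset.mem_filter, Finset.mem_univ, true_and, Finset.mem_insert,
    Finset.mem_singleton]
  rw [mat_ne_zero_iff hn]
  constructor
  · rintro (h | h)
    · left; rw [h]; simp
    · right
      have h2 : J.symm j + 1 = I.symm i := by rw [h]; ring
      rw [h2]; simp
  · rintro (h | h)
    · left; rw [h]; simp
    · right; rw [h]; simp

lemma symb_filter (I J : ZMod n ≃ Fin n) (β : Fin (2 * n - 3) ≃ Free n) (k : ℕ) (hk1 : 1 ≤ k) :
    (Finset.univ.filter fun p : Fin n × Fin n => Mat n I J β p.1 p.2 = k) =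
      (Finset.univ.filter fun e => lab n β e = k).image (phi n I J) := by
  ext p
  simp only [Finset.mem_filter, Finset.mem_univ, true_and, Finset.mem_image]
  constructor
  · intro h
    obtain ⟨e, he⟩ := mat_pos_mem_range hn I J β p.1 p.2 (by rw [h]; omega)
    refine ⟨e, ⟨?_, ?_⟩⟩
    · rw [← mat_at_phi hn I J β e, he]; exact h
    · rw [he]
  · rintro ⟨e, he, rfl⟩
    rw [mat_at_phi hn]; exact he

lemma lab_filter_card (β : Fin (2 * n - 3) ≃ Free n) (k : ℕ) (hk1 : 1 ≤ k) (hk2 : k ≤ n) :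
    (Finset.univ.filter fun e => lab n β e = k).card = 2 := by
  rcases Nat.lt_or_ge k 3 with hk3 | hk3
  · interval_cases k
    · -- k = 1
      have hset : (Finset.univ.filter fun e => lab n β e = 1) =
          {((0 : ZMod n), false), ((1 : ZMod n), false)} := by
        ext e
        simp only [Finset.mem_filter, Finset.mem_univ, true_and, Finset.mem_insert,
          Finset.mem_singleton]
        by_cases h : e ≠ (0, false) ∧ e ≠ (1, false) ∧ e ≠ (0, true)
        · rw [lab, dif_pos h]
          have h2 : 2 ≤ pi2 (β.symm ⟨e, h⟩).val := by unfold pi2; omega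
          constructor
          · omega
          · rintro (rfl | rfl)
            · exact absurd rfl h.1
            · exact absurd rfl h.2.1
        · rw [lab, dif_neg h]
          have h' : e = (0, false) ∨ e = (1, false) ∨ e = (0, true) := by
            by_contra hc
            push_neg at hc
            exact h ⟨hc.1, hc.2.1, hc.2.2⟩
          by_cases h3 : e = (0, true)
          · rw [if_pos h3]
            subst h3
            constructor
            · omega
            · rintro (h4 | h4) <;> simp at h4
          · rw [if_neg h3]
            simp only [true_iff]
            rcases h' with h' | h' | h'
            · exact Or.inl h'
            · exact Or.inr h'
            · exact absurd h' h3
      rw [hset]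
      refine Finset.card_pair ?_
      intro h
      have := congrArg Prod.fst h
      simp only at this
      exact one_ne_zero' hn this.symm
    · -- k = 2
      have hn3 : 0 < 2 * n - 3 := by omega
      set t0 : Fin (2 * n - 3) := ⟨0, hn3⟩ with ht0
      have hset : (Finset.univ.filter fun e => lab n β e = 2) =
          {((0 : ZMod n), true), (β t0).val} := by
        ext e
        simp only [Finset.mem_filter, Finset.mem_univ, true_and, Finset.mem_insert,
          Finset.mem_singleton]
        by_cases h : e ≠ (0, false) ∧ e ≠ (1, false) ∧ e ≠ (0, true)
        · rw [lab, dif_pos h]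
          have hiff : pi2 (β.symm ⟨e, h⟩).val = 2 ↔ β.symm ⟨e, h⟩ = t0 := by
            rw [Fin.ext_iff]
            unfold pi2
            simp only [ht0]
            omega
          rw [hiff, show β.symm ⟨e, h⟩ = t0 ↔ ⟨e, h⟩ = β t0 from Equiv.symm_apply_eq β]
          constructor
          · intro h4
            right; rw [← h4]
          · rintro (h4 | h4)
            · exact absurd h4 h.2.2
            · exact Subtype.ext h4
        · rw [lab, dif_neg h]
          have h' : e = (0, false) ∨ e = (1, false) ∨ e = (0, true) := by
            by_contra hc
            push_neg at hc
            exact h ⟨hc.1, hc.2.1, hc.2.2⟩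
          by_cases h3 : e = (0, true)
          · rw [if_pos h3]
            simp [h3]
          · rw [if_neg h3]
            have hne : e ≠ (β t0).val := by
              intro he
              rcases h' with h | h | h
              · exact (β t0).prop.1 (he ▸ h)
              · exact (β t0).prop.2.1 (he ▸ h)
              · exact h3 h
            constructor
            · omega
            · rintro (h4 | h4)
              · exact absurd h4 h3
              · exact absurd h4 hne
      rw [hset]
      exact Finset.card_pair (fun h => (β t0).prop.2.2 h.symm)
  · -- 3 ≤ k ≤ n
    have hb1 : 2 * k - 5 < 2 * n - 3 := by omega
    have hb2 : 2 * k - 4 < 2 * n - 3 := by omega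
    set t1 : Fin (2 * n - 3) := ⟨2 * k - 5, hb1⟩ with ht1
    set t2 : Fin (2 * n - 3) := ⟨2 * k - 4, hb2⟩ with ht2
    have hset : (Finset.univ.filter fun e => lab n β e = k) =
        {(β t1).val, (β t2).val} := by
      ext e
      simp only [Finset.mem_filter, Finset.mem_univ, true_and, Finset.mem_insert,
        Finset.mem_singleton]
      by_cases h : e ≠ (0, false) ∧ e ≠ (1, false) ∧ e ≠ (0, true)
      · rw [lab, dif_pos h]
        have hiff : pi2 (β.symm ⟨e, h⟩).val = k ↔
            (β.symm ⟨e, h⟩ = t1 ∨ β.symm ⟨e, h⟩ = t2) := by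
          rw [Fin.ext_iff, Fin.ext_iff]
          unfold pi2
          simp only [ht1, ht2]
          omega
        rw [hiff, show β.symm ⟨e, h⟩ = t1 ↔ ⟨e, h⟩ = β t1 from Equiv.symm_apply_eq β,
          show β.symm ⟨e, h⟩ = t2 ↔ ⟨e, h⟩ = β t2 from Equiv.symm_apply_eq β]
        constructor
        · rintro (h4 | h4)
          · left; rw [← h4]
          · right; rw [← h4]
        · rintro (h4 | h4)
          · left; exact Subtype.ext h4
          · right; exact Subtype.ext h4
      · rw [lab, dif_neg h]
        have h' : e = (0, false) ∨ e = (1, false) ∨ e = (0, true) := by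
          by_contra hc
          push_neg at hc
          exact h ⟨hc.1, hc.2.1, hc.2.2⟩
        have hne1 : e ≠ (β t1).val := by
          intro he
          rcases h' with h | h | h
          · exact (β t1).prop.1 (he ▸ h)
          · exact (β t1).prop.2.1 (he ▸ h)
          · exact (β t1).prop.2.2 (he ▸ h)
        have hne2 : e ≠ (β t2).val := by
          intro he
          rcases h' with h | h | h
          · exact (β t2).prop.1 (he ▸ h)
          · exact (β t2).prop.2.1 (he ▸ h)
          · exact (β t2).prop.2.2 (he ▸ h)
        constructor
        · split_ifs <;> omega
        · rintro (h4 | h4)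
          · exact absurd h4 hne1
          · exact absurd h4 hne2
    rw [hset]
    refine Finset.card_pair ?_
    intro h
    have : t1 = t2 := β.injective (Subtype.ext h)
    rw [Fin.ext_iff] at this
    simp only [ht1, ht2] at this
    omega

lemma mat_mem_good (I J : ZMod n ≃ Fin n) (β : Fin (2 * n - 3) ≃ Free n) :
    Mat n I J β ∈ goodMatrices n := by
  refine ⟨?_, ?_, ?_, ?_, ?_⟩
  · intro i j
    unfold Mat
    split_ifs
    · exact lab_le hn β _
    · exact lab_le hn β _
    · exact Nat.zero_le n
  · intro i
    rw [row_filter hn]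
    exact Finset.card_pair (fun h => (sub_one_ne hn (I.symm i)).symm (J.injective h))
  · intro j
    rw [col_filter hn]
    exact Finset.card_pair (fun h => (add_one_ne hn (J.symm j)) (I.injective h).symm)
  · intro k hk1 hk2
    rw [symb_filter hn I J β k hk1,
      Finset.card_image_of_injective _ (phi_inj hn I J),
      lab_filter_card hn β k hk1 hk2]
  · refine ⟨(I : ZMod n → Fin n), (J : ZMod n → Fin n), I.bijective, J.bijective, ?_⟩
    ext ⟨i, j⟩
    simp only [Set.mem_setOf_eq]
    rw [mat_ne_zero_iff hn]
    constructor
    · rintro (h | h)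
      · refine ⟨I.symm i, Or.inl ?_⟩
        rw [Prod.mk.injEq]
        exact ⟨by simp, (Equiv.symm_apply_eq J).mp h⟩
      · refine ⟨J.symm j, Or.inr ?_⟩
        rw [Prod.mk.injEq]
        have h2 : J.symm j + 1 = I.symm i := by rw [h]; ring
        refine ⟨?_, by simp⟩
        rw [h2]; simp
    · rintro ⟨a, (h | h)⟩ <;> rw [Prod.mk.injEq] at h <;> obtain ⟨h1, h2⟩ := h
      · left
        rw [h1, h2]; simp
      · right
        rw [h1, h2]
        simp only [Equiv.symm_apply_apply]
        ring

omit hn in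
lemma lab_anchor_00 (β : Fin (2 * n - 3) ≃ Free n) : lab n β ((0 : ZMod n), false) = 1 := by
  rw [lab, dif_neg (by simp), if_neg (by simp)]

omit hn in
lemma lab_anchor_10 (β : Fin (2 * n - 3) ≃ Free n) : lab n β ((1 : ZMod n), false) = 1 := by
  rw [lab, dif_neg (by simp), if_neg (by simp)]

omit hn in
lemma lab_anchor_01 (β : Fin (2 * n - 3) ≃ Free n) : lab n β ((0 : ZMod n), true) = 2 := by
  rw [lab, dif_neg (by simp), if_pos rfl]

omit hn in
lemma lab_eq_one_iff (β : Fin (2 * n - 3) ≃ Free n) (e : ZMod n × Bool) :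
    lab n β e = 1 ↔ (e = (0, false) ∨ e = (1, false)) := by
  by_cases h : e ≠ (0, false) ∧ e ≠ (1, false) ∧ e ≠ (0, true)
  · rw [lab, dif_pos h]
    have h2 : 2 ≤ pi2 (β.symm ⟨e, h⟩).val := by unfold pi2; omega
    constructor
    · omega
    · rintro (rfl | rfl)
      · exact absurd rfl h.1
      · exact absurd rfl h.2.1
  · have h' : e = (0, false) ∨ e = (1, false) ∨ e = (0, true) := by
      by_contra hc
      push_neg at hc
      exact h ⟨hc.1, hc.2.1, hc.2.2⟩
    rcases h' with rfl | rfl | rfl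
    · simp [lab_anchor_00]
    · simp [lab_anchor_10]
    · rw [lab_anchor_01]
      constructor
      · omega
      · rintro (h4 | h4) <;> simp at h4

lemma mat_eq_one_iff (I J : ZMod n ≃ Fin n) (β : Fin (2 * n - 3) ≃ Free n) (i j : Fin n) :
    Mat n I J β i j = 1 ↔ ((i, j) = (I 0, J 0) ∨ (i, j) = (I 1, J 1)) := by
  constructor
  · intro h
    obtain ⟨e, he⟩ := mat_pos_mem_range hn I J β i j (by omega)
    have hlab : lab n β e = 1 := by rw [← mat_at_phi hn I J β e, he]; exact h
    rcases (lab_eq_one_iff β e).mp hlab with rfl | rfl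
    · left; rw [← he]; rfl
    · right; rw [← he]
      unfold phi
      simp
  · rintro (h | h) <;> rw [Prod.mk.injEq] at h <;> obtain ⟨rfl, rfl⟩ := h
    · rw [mat_apply_vert, lab_anchor_00]
    · rw [mat_apply_vert, lab_anchor_10]

lemma mat_two (I J : ZMod n ≃ Fin n) (β : Fin (2 * n - 3) ≃ Free n) :
    Mat n I J β (I 1) (J 0) = 2 := by
  have := mat_apply_horiz hn I J β 0
  rw [zero_add] at this
  rw [this, lab_anchor_01]

lemma one_ne_negone : (1 : ZMod n) ≠ -1 := by
  intro h
  have h2 : ((2 : ℕ) : ZMod n) = 0 := by push_cast; linear_combination h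
  rw [ZMod.natCast_eq_zero_iff] at h2
  have := Nat.le_of_dvd (by norm_num) h2
  omega

lemma mat_cross_zero (I J : ZMod n ≃ Fin n) (β : Fin (2 * n - 3) ≃ Free n) :
    Mat n I J β (I 0) (J 1) = 0 := by
  unfold Mat
  rw [if_neg, if_neg]
  · simp only [Equiv.symm_apply_apply]
    rw [zero_sub]
    exact one_ne_negone hn
  · simp only [Equiv.symm_apply_apply]
    exact one_ne_zero' hn

lemma IJ_eq (I J I' J' : ZMod n ≃ Fin n) (β β' : Fin (2 * n - 3) ≃ Free n)
    (hM : Mat n I J β = Mat n I' J' β') : I = I' ∧ J = J' := by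
  have h01 : (0 : ZMod n) ≠ 1 := (one_ne_zero' hn).symm
  -- base case
  have hone : ∀ i j, (((i, j) = (I 0, J 0) ∨ (i, j) = (I 1, J 1)) ↔
      ((i, j) = (I' 0, J' 0) ∨ (i, j) = (I' 1, J' 1))) := by
    intro i j
    rw [← mat_eq_one_iff hn I J β, ← mat_eq_one_iff hn I' J' β', hM]
  have hA := (hone (I 0) (J 0)).mp (Or.inl rfl)
  have hB := (hone (I 1) (J 1)).mp (Or.inr rfl)
  have hbase : I 0 = I' 0 ∧ J 0 = J' 0 ∧ I 1 = I' 1 ∧ J 1 = J' 1 := by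
    rcases hA with hA | hA <;> rcases hB with hB | hB <;>
      rw [Prod.mk.injEq] at hA hB
    · exfalso
      exact h01 (J.injective (hA.2.trans hB.2.symm))
    · exact ⟨hA.1, hA.2, hB.1, hB.2⟩
    · -- crossed case
      exfalso
      have h2 : Mat n I J β (I 1) (J 0) = 2 := mat_two hn I J β
      rw [hM, hB.1, hA.2] at h2
      rw [mat_cross_zero hn I' J' β'] at h2
      omega
    · exfalso
      exact h01 (J.injective (hA.2.trans hB.2.symm))
  -- induction
  have key : ∀ k : ℕ, I (k : ZMod n) = I' (k : ZMod n) ∧ J (k : ZMod n) = J' (k : ZMod n) := by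
    intro k
    induction k with
    | zero => simpa using ⟨hbase.1, hbase.2.1⟩
    | succ m ih =>
      obtain ⟨hI, hJ⟩ := ih
      set a : ZMod n := (m : ZMod n) with ha
      have hcast : ((m + 1 : ℕ) : ZMod n) = a + 1 := by push_cast; rfl
      rw [hcast]
      have hane : a + 1 ≠ a := add_one_ne hn a
      -- column argument
      have hcol : ({I (J.symm (J a)), I (J.symm (J a) + 1)} : Finset (Fin n)) =
          {I' (J'.symm (J' a)), I' (J'.symm (J' a) + 1)} := by
        rw [← col_filter hn I J β (J a), ← col_filter hn I' J' β' (J' a), hM, hJ]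
      simp only [Equiv.symm_apply_apply] at hcol
      have hmemI : I (a + 1) ∈ ({I' a, I' (a + 1)} : Finset (Fin n)) := by
        rw [← hcol]
        simp
      have hI1 : I (a + 1) = I' (a + 1) := by
        rcases Finset.mem_insert.mp hmemI with h | h
        · exfalso
          rw [← hI] at h
          exact hane (I.injective h)
        · exact Finset.mem_singleton.mp h
      -- row argument
      have hrow : ({J (I.symm (I (a+1))), J (I.symm (I (a+1)) - 1)} : Finset (Fin n)) =
          {J' (I'.symm (I' (a+1))), J' (I'.symm (I' (a+1)) - 1)} := by
        rw [← row_filter hn I J β (I (a+1)), ← row_filter hn I' J' β' (I' (a+1)), hM, hI1]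
      simp only [Equiv.symm_apply_apply, add_sub_cancel_right] at hrow
      have hmemJ : J (a + 1) ∈ ({J' (a + 1), J' a} : Finset (Fin n)) := by
        rw [← hrow]
        simp
      have hJ1 : J (a + 1) = J' (a + 1) := by
        rcases Finset.mem_insert.mp hmemJ with h | h
        · exact h
        · exfalso
          rw [Finset.mem_singleton] at h
          rw [← hJ] at h
          exact hane (J.injective h)
      exact ⟨hI1, hJ1⟩
  constructor <;> apply Equiv.ext <;> intro a
  · have := (key a.val).1
    rwa [ZMod.natCast_rightInverse a] at this
  · have := (key a.val).2
    rwa [ZMod.natCast_rightInverse a] at this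

end

def key (n : ℕ) (e : ZMod n × Bool) : ℕ := 2 * e.1.val + (if e.2 then 1 else 0)

def idx1 (n : ℕ) (k : Fin (n - 2)) : Fin (2 * n - 3) :=
  ⟨2 * k.val + 1, by have := k.isLt; omega⟩

def idx2 (n : ℕ) (k : Fin (n - 2)) : Fin (2 * n - 3) :=
  ⟨2 * k.val + 2, by have := k.isLt; omega⟩

def bits (n : ℕ) (β : Fin (2 * n - 3) ≃ Free n) : Fin (n - 2) → Bool :=
  fun k => decide (key n (β (idx1 n k)).val < key n (β (idx2 n k)).val)

section

variable {n : ℕ} [NeZero n] (hn : 3 ≤ n)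

lemma idx1_val (k : Fin (n - 2)) : (idx1 n k).val = 2 * k.val + 1 := rfl

lemma idx2_val (k : Fin (n - 2)) : (idx2 n k).val = 2 * k.val + 2 := rfl

lemma key_inj : Function.Injective (key n) := by
  rintro ⟨a, b⟩ ⟨a', b'⟩ h
  unfold key at h
  simp only at h
  cases b <;> cases b' <;>
    simp only [Bool.false_eq_true, if_false, if_true] at h
  · have : a.val = a'.val := by omega
    rw [ZMod.val_injective n this]
  · omega
  · omega
  · have : a.val = a'.val := by omega
    rw [ZMod.val_injective n this]

include hn

lemma lab_eq_of_mat_eq (I J : ZMod n ≃ Fin n) (β β' : Fin (2 * n - 3) ≃ Free n)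
    (hM : Mat n I J β = Mat n I J β') : ∀ e, lab n β e = lab n β' e := by
  rintro ⟨a, b⟩
  cases b
  · rw [← mat_apply_vert I J β a, ← mat_apply_vert I J β' a, hM]
  · rw [← mat_apply_horiz hn I J β a, ← mat_apply_horiz hn I J β' a, hM]

omit hn

lemma idx_ne (k : Fin (n - 2)) : idx1 n k ≠ idx2 n k := by
  intro h
  have := congrArg Fin.val h
  simp only [idx1, idx2] at this
  omega

lemma beta_eq (β β' : Fin (2 * n - 3) ≃ Free n)
    (hlab : ∀ e, lab n β e = lab n β' e)
    (hbits : bits n β = bits n β') : β = β' := by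
  have hsym : ∀ t : Fin (2 * n - 3), pi2 (β'.symm (β t)).val = pi2 t.val := by
    intro t
    have h1 := hlab (β t).val
    rw [lab, lab, dif_pos (β t).prop, dif_pos (β t).prop] at h1
    change pi2 (β.symm (β t)).val = pi2 (β'.symm (β t)).val at h1
    rw [Equiv.symm_apply_apply] at h1
    exact h1.symm
  have hpair : ∀ k : Fin (n - 2),
      β (idx1 n k) = β' (idx1 n k) ∧ β (idx2 n k) = β' (idx2 n k) := by
    intro k
    have h1 := hsym (idx1 n k)
    have h2 := hsym (idx2 n k)
    have hv1 : (β'.symm (β (idx1 n k))).val = 2 * k.val + 1 ∨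
        (β'.symm (β (idx1 n k))).val = 2 * k.val + 2 := by
      rw [idx1_val] at h1; unfold pi2 at h1; omega
    have hv2 : (β'.symm (β (idx2 n k))).val = 2 * k.val + 1 ∨
        (β'.symm (β (idx2 n k))).val = 2 * k.val + 2 := by
      rw [idx2_val] at h2; unfold pi2 at h2; omega
    by_cases hc : β (idx1 n k) = β' (idx1 n k)
    · refine ⟨hc, ?_⟩
      rcases hv2 with hv | hv
      · exfalso
        have he : β'.symm (β (idx2 n k)) = idx1 n k := Fin.ext (by simpa [idx1_val] using hv)
        rw [Equiv.symm_apply_eq] at he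
        rw [← hc] at he
        exact idx_ne k (β.injective he).symm
      · have he : β'.symm (β (idx2 n k)) = idx2 n k := Fin.ext (by simpa [idx2_val] using hv)
        rw [Equiv.symm_apply_eq] at he
        exact he
    · exfalso
      have hc2 : β (idx1 n k) = β' (idx2 n k) := by
        rcases hv1 with hv | hv
        · exfalso
          apply hc
          have he : β'.symm (β (idx1 n k)) = idx1 n k := Fin.ext (by simpa [idx1_val] using hv)
          rw [Equiv.symm_apply_eq] at he
          exact he
        · have he : β'.symm (β (idx1 n k)) = idx2 n k := Fin.ext (by simpa [idx2_val] using hv)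
          rw [Equiv.symm_apply_eq] at he
          exact he
      have hc3 : β (idx2 n k) = β' (idx1 n k) := by
        rcases hv2 with hv | hv
        · have he : β'.symm (β (idx2 n k)) = idx1 n k := Fin.ext (by simpa [idx1_val] using hv)
          rw [Equiv.symm_apply_eq] at he
          exact he
        · exfalso
          have he : β'.symm (β (idx2 n k)) = idx2 n k := Fin.ext (by simpa [idx2_val] using hv)
          rw [Equiv.symm_apply_eq] at he
          exact idx_ne k (β.injective (hc2.trans he.symm))
      have hb := congrFun hbits k
      unfold bits at hb
      rw [decide_eq_decide, ← hc2, ← hc3] at hb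
      have hkne : key n (β (idx1 n k)).val ≠ key n (β (idx2 n k)).val := by
        intro h
        exact idx_ne k (β.injective (Subtype.ext (key_inj h)))
      rcases Nat.lt_trichotomy (key n (β (idx1 n k)).val) (key n (β (idx2 n k)).val) with
        h | h | h
      · have := hb.mp h; omega
      · exact hkne h
      · have := hb.mpr h; omega
  apply Equiv.ext
  intro t
  rcases Nat.eq_zero_or_pos t.val with h0 | hpos
  · have h1 := hsym t
    have hval : (β'.symm (β t)).val = t.val := by unfold pi2 at h1; omega
    have he : β'.symm (β t) = t := Fin.ext hval
    rw [Equiv.symm_apply_eq] at he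
    exact he
  · set k : ℕ := (t.val - 1) / 2 with hk
    have hkb : k < n - 2 := by have := t.isLt; omega
    set kf : Fin (n - 2) := ⟨k, hkb⟩ with hkf
    have hcase : t.val = 2 * k + 1 ∨ t.val = 2 * k + 2 := by omega
    rcases hcase with hc | hc
    · have ht : t = idx1 n kf := Fin.ext (by simpa [idx1_val] using hc)
      rw [ht]
      exact (hpair kf).1
    · have ht : t = idx2 n kf := Fin.ext (by simpa [idx2_val] using hc)
      rw [ht]
      exact (hpair kf).2

end

section

variable {n : ℕ} [NeZero n]

lemma good_finite : (goodMatrices n).Finite := by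
  have h : goodMatrices n ⊆
      Set.range (fun g : Fin n → Fin n → Fin (n + 1) => fun i j => ((g i j : ℕ))) := by
    intro M hM
    exact ⟨fun i j => ⟨M i j, Nat.lt_succ_of_le (hM.1 i j)⟩, by funext i j; rfl⟩
  exact (Set.finite_range _).subset h

variable (hn : 3 ≤ n)
include hn

lemma card_free : Fintype.card (Free n) = 2 * n - 3 := by
  have e : Free n ≃ {e : ZMod n × Bool //
      e ≠ (0, false) ∧ e ≠ (1, false) ∧ e ≠ (0, true)} := Equiv.refl _
  rw [Fintype.card_congr e, Fintype.card_subtype]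
  have hset : (Finset.univ.filter fun e : ZMod n × Bool =>
      e ≠ (0, false) ∧ e ≠ (1, false) ∧ e ≠ (0, true)) =
      Finset.univ \ {((0 : ZMod n), false), ((1 : ZMod n), false), ((0 : ZMod n), true)} := by
    ext e
    simp only [Finset.mem_filter, Finset.mem_univ, true_and, Finset.mem_sdiff,
      Finset.mem_insert, Finset.mem_singleton]
    tauto
  rw [hset, Finset.card_sdiff_of_subset (Finset.subset_univ _)]
  have h01 : ((0 : ZMod n), false) ≠ ((1 : ZMod n), false) := by
    intro h
    exact one_ne_zero' hn (congrArg Prod.fst h).symm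
  have h0t : ((0 : ZMod n), false) ≠ ((0 : ZMod n), true) := by
    intro h
    simpa using congrArg Prod.snd h
  have h1t : ((1 : ZMod n), false) ≠ ((0 : ZMod n), true) := by
    intro h
    simpa using congrArg Prod.snd h
  have hc3 : ({((0 : ZMod n), false), ((1 : ZMod n), false), ((0 : ZMod n), true)} :
      Finset (ZMod n × Bool)).card = 3 := by
    rw [Finset.card_insert_of_notMem (by simp [h01, h0t]),
      Finset.card_insert_of_notMem (by simp [h1t]), Finset.card_singleton]
  rw [hc3, Finset.card_univ, Fintype.card_prod, ZMod.card, Fintype.card_bool]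
  omega

lemma main_bound :
    n.factorial * n.factorial * (2 * n - 3).factorial ≤
      (goodMatrices n).ncard * 2 ^ (n - 2) := by
  haveI : Finite (goodMatrices n) := good_finite.to_subtype
  set G : ((ZMod n ≃ Fin n) × (ZMod n ≃ Fin n) × (Fin (2 * n - 3) ≃ Free n)) →
      ((goodMatrices n) × (Fin (n - 2) → Bool)) :=
    fun d => (⟨Mat n d.1 d.2.1 d.2.2, mat_mem_good hn d.1 d.2.1 d.2.2⟩, bits n d.2.2) with hG
  have hGinj : Function.Injective G := by
    rintro ⟨I, J, β⟩ ⟨I', J', β'⟩ h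
    rw [hG, Prod.mk.injEq, Subtype.mk.injEq] at h
    obtain ⟨hM, hb⟩ := h
    obtain ⟨hI, hJ⟩ := IJ_eq hn I J I' J' β β' hM
    subst hI
    subst hJ
    have hlab := lab_eq_of_mat_eq hn I J β β' hM
    have hβ := beta_eq β β' hlab hb
    subst hβ
    rfl
  have hcard := Nat.card_le_card_of_injective G hGinj
  have eZ : ZMod n ≃ Fin n := Fintype.equivFinOfCardEq (ZMod.card n)
  have eF : Fin (2 * n - 3) ≃ Free n := (Fintype.equivFinOfCardEq (card_free hn)).symm
  have hL : Nat.card ((ZMod n ≃ Fin n) × (ZMod n ≃ Fin n) × (Fin (2 * n - 3) ≃ Free n)) =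
      n.factorial * n.factorial * (2 * n - 3).factorial := by
    rw [Nat.card_prod, Nat.card_prod]
    simp only [Nat.card_eq_fintype_card, Fintype.card_equiv eZ, Fintype.card_equiv eF,
      ZMod.card, Fintype.card_fin]
    ring
  have hR : Nat.card ((goodMatrices n) × (Fin (n - 2) → Bool)) =
      (goodMatrices n).ncard * 2 ^ (n - 2) := by
    rw [Nat.card_prod]
    congr 1
    rw [Nat.card_eq_fintype_card, Fintype.card_fun, Fintype.card_bool, Fintype.card_fin]
  rw [hL, hR] at hcard
  exact hcard

end

lemma good2_mem : (fun i j => if i = j then 1 else 2) ∈ goodMatrices 2 := by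
  refine ⟨?_, ?_, ?_, ?_, ?_⟩
  · decide
  · decide
  · decide
  · intro k hk1 hk2
    interval_cases k <;> decide
  · refine ⟨(fun a => a), (fun a => a), ?_, ?_, ?_⟩
    · exact ⟨fun a b h => h, fun b => ⟨b, rfl⟩⟩
    · exact ⟨fun a b h => h, fun b => ⟨b, rfl⟩⟩
    · ext p
      simp only [Set.mem_setOf_eq]
      constructor
      · intro _
        fin_cases p <;> decide
      · intro _
        split <;> omega

end Stmt18


/-- The number of such matrices is at least `(1/2)·n!·(n−1)!·(2n−3)!/2^(n−2)`,
i.e. `n!·(n−1)!·(2n−3)!/2^(n−1)`; in particular it exceeds `(n!)⁴` for all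
sufficiently large `n`. -/
theorem stmt18 (n : ℕ) (hn : 2 ≤ n) :
    Nat.factorial n * Nat.factorial (n - 1) * Nat.factorial (2 * n - 3) ≤
      (goodMatrices n).ncard * 2 ^ (n - 1) ∧
    ∃ N : ℕ, ∀ m : ℕ, N ≤ m → (Nat.factorial m) ^ 4 < (goodMatrices m).ncard := by
  constructor
  · rcases Nat.lt_or_ge n 3 with h3 | h3
    · have hn2 : n = 2 := by omega
      subst hn2
      have hfin : (goodMatrices 2).Finite := Stmt18.good_finite
      have hpos : 0 < (goodMatrices 2).ncard :=
        (Set.ncard_pos hfin).mpr ⟨_, Stmt18.good2_mem⟩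
      norm_num [Nat.factorial]
      omega
    · haveI : NeZero n := ⟨by omega⟩
      have hb := Stmt18.main_bound h3
      calc n.factorial * (n - 1).factorial * (2 * n - 3).factorial
          ≤ n.factorial * n.factorial * (2 * n - 3).factorial := by
            have := Nat.factorial_le (show n - 1 ≤ n by omega)
            exact Nat.mul_le_mul_right _ (Nat.mul_le_mul_left _ this)
        _ ≤ (goodMatrices n).ncard * 2 ^ (n - 2) := hb
        _ ≤ (goodMatrices n).ncard * 2 ^ (n - 1) := by
            have : (2:ℕ) ^ (n - 2) ≤ 2 ^ (n - 1) :=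
              Nat.pow_le_pow_right (by norm_num) (by omega)
            exact Nat.mul_le_mul_left _ this
  · refine ⟨44, fun m hm => ?_⟩
    haveI : NeZero m := ⟨by omega⟩
    have h3 : 3 ≤ m := by omega
    have hb := Stmt18.main_bound h3
    have hf := fact_ineq m hm
    have hkey : (m.factorial) ^ 4 * 2 ^ (m - 2) < (goodMatrices m).ncard * 2 ^ (m - 2) := by
      calc (m.factorial) ^ 4 * 2 ^ (m - 2)
          = (m.factorial) ^ 2 * ((m.factorial) ^ 2 * 2 ^ (m - 2)) := by ring
        _ < (m.factorial) ^ 2 * (2 * m - 3).factorial := by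
            exact mul_lt_mul_of_pos_left hf (by positivity)
        _ = m.factorial * m.factorial * (2 * m - 3).factorial := by ring
        _ ≤ (goodMatrices m).ncard * 2 ^ (m - 2) := hb
    exact Nat.lt_of_mul_lt_mul_right hkey
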